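/- arXiv:2309.00182 — 5 statements merged into one kernel-verified Lean document; each statement's English description precedes it below -/
import Mathlib

section
/- For every integer n ≥ 6, f(n, 6, 14) ≥ (5/6)·binom(n,2). -/
open Finset

/-- The set of colors used by the edge-coloring `χ` on the edges (2-element subsets)
contained in the vertex set `S`. -/
def colorsIn {n : ℕ} {α : Type*} [DecidableEq α]
    (χ : Finset (Fin n) → α) (S : Finset (Fin n)) : Finset α :=
  (S.powersetCard 2).image χ

/-- The generalized Ramsey number `f(n,p,q)`: the minimum number of colors in an
edge-coloring of `K_n` such that every set of `p` vertices spans at least `q` colors. -/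
noncomputable def genRamsey (n p q : ℕ) : ℕ :=
  sInf {C : ℕ | ∃ χ : Finset (Fin n) → Fin C,
    ∀ S : Finset (Fin n), S.card = p → q ≤ (colorsIn χ S).card}

/-- A hypergraph (edge set `E`) on vertex set `Fin n` is `(s,k)`-free if every set of `s`
vertices contains at most `k - 1` (i.e. fewer than `k`) edges. -/
def IsSKFree {n : ℕ} (s k : ℕ) (E : Finset (Finset (Fin n))) : Prop :=
  ∀ S : Finset (Fin n), S.card = s → (E.filter (fun e => e ⊆ S)).card < k

/-- `F^(r)(n; s, k)`: the maximum number of edges in an `(s,k)`-free `r`-uniform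
hypergraph on `n` vertices. -/
noncomputable def Fval (r n s k : ℕ) : ℕ :=
  sSup {m : ℕ | ∃ E : Finset (Finset (Fin n)),
    (∀ e ∈ E, e.card = r) ∧ IsSKFree s k E ∧ E.card = m}

/-- `G^(r)(n; s, k)`: the maximum number of edges, counted with multiplicity, in an
`r`-uniform multi-hypergraph (multiplicity function `μ`) on `n` vertices in which every
set of `s` vertices contains, with multiplicity, at most `k - 1` edges. -/
noncomputable def Gval (r n s k : ℕ) : ℕ :=
  sSup {m : ℕ | ∃ μ : Finset (Fin n) → ℕ,
    (∀ e, μ e ≠ 0 → e.card = r) ∧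
    (∀ S : Finset (Fin n), S.card = s → ∑ e ∈ S.powersetCard r, μ e < k) ∧
    ∑ e ∈ (univ : Finset (Fin n)).powersetCard r, μ e = m}

/-- `H^(4)(n; 2ℓ, ℓ-1)`: the maximum number of edges of a 4-uniform hypergraph on `n`
vertices that is `(2ℓ, ℓ-1)`-free, is `(2i+1, i)`-free for all `2 ≤ i ≤ ℓ-2`, and in
which every vertex has degree `0` or degree at least `ℓ-1`. -/
noncomputable def Hval (n ℓ : ℕ) : ℕ :=
  sSup {m : ℕ | ∃ E : Finset (Finset (Fin n)),
    (∀ e ∈ E, e.card = 4) ∧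
    IsSKFree (2 * ℓ) (ℓ - 1) E ∧
    (∀ i, 2 ≤ i → i ≤ ℓ - 2 → IsSKFree (2 * i + 1) i E) ∧
    (∀ v : Fin n, (E.filter (fun e => v ∈ e)).card = 0 ∨
      ℓ - 1 ≤ (E.filter (fun e => v ∈ e)).card) ∧
    E.card = m}


lemma core6 {n C : ℕ} (hn : 6 ≤ n) {χ : Finset (Fin n) → Fin C}
    (hχ : ∀ S : Finset (Fin n), S.card = 6 → 14 ≤ (colorsIn χ S).card)
    {e f g h : Finset (Fin n)} (he : e.card = 2) (hf : f.card = 2)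
    (hg : g.card = 2) (hh : h.card = 2)
    (hcef : χ e = χ f) (hcgh : χ g = χ h)
    (heg : e ≠ g) (hfe : f ≠ e) (hfg : f ≠ g) (hhe : h ≠ e) (hhg : h ≠ g)
    (hA : (e ∪ f ∪ g ∪ h).card ≤ 6) : False := by
  obtain ⟨S, hSsub, hScard⟩ := Finset.exists_superset_card_eq hA (by simpa using hn)
  have hsub : ∀ t : Finset (Fin n), t ⊆ e ∪ f ∪ g ∪ h → t.card = 2 →
      t ∈ S.powersetCard 2 := fun t ht htc =>
    Finset.mem_powersetCard.2 ⟨ht.trans hSsub, htc⟩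
  have heS : e ∈ S.powersetCard 2 := hsub e (by intro x hx; simp [hx]) he
  have hfS : f ∈ S.powersetCard 2 := hsub f (by intro x hx; simp [hx]) hf
  have hgS : g ∈ S.powersetCard 2 := hsub g (by intro x hx; simp [hx]) hg
  have hhS : h ∈ S.powersetCard 2 := hsub h (by intro x hx; simp [hx]) hh
  set P' := ((S.powersetCard 2).erase e).erase g with hP'
  have hfP' : f ∈ P' := by
    simp only [hP', Finset.mem_erase]
    exact ⟨hfg, hfe, hfS⟩
  have hhP' : h ∈ P' := by
    simp only [hP', Finset.mem_erase]
    exact ⟨hhg, hhe, hhS⟩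
  have himg : (S.powersetCard 2).image χ ⊆ P'.image χ := by
    intro x hx
    obtain ⟨t, ht, rfl⟩ := Finset.mem_image.1 hx
    by_cases hte : t = e
    · exact Finset.mem_image.2 ⟨f, hfP', by rw [hte, hcef]⟩
    by_cases htg : t = g
    · exact Finset.mem_image.2 ⟨h, hhP', by rw [htg, hcgh]⟩
    · exact Finset.mem_image.2 ⟨t, by simp [hP', Finset.mem_erase, htg, hte, ht], rfl⟩
  have hP6card : (S.powersetCard 2).card = 15 := by
    rw [Finset.card_powersetCard, hScard]; rfl
  have hP'card : P'.card = 13 := by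
    rw [hP', Finset.card_erase_of_mem (Finset.mem_erase.2 ⟨fun hx => heg hx.symm, hgS⟩),
      Finset.card_erase_of_mem heS, hP6card]
  have h14 := hχ S hScard
  have := (Finset.card_le_card himg).trans ((Finset.card_image_le).trans hP'card.le)
  have : 14 ≤ 13 := le_trans h14 (by simpa [colorsIn] using this)
  omega

lemma main6 {n C : ℕ} (hn : 6 ≤ n) (χ : Finset (Fin n) → Fin C)
    (hχ : ∀ S : Finset (Fin n), S.card = 6 → 14 ≤ (colorsIn χ S).card) :
    (5/6 : ℝ) * (n.choose 2 : ℝ) ≤ (C : ℝ) := by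
  classical
  set P : Finset (Finset (Fin n)) := (univ : Finset (Fin n)).powersetCard 2 with hPdef
  have hmemP : ∀ t : Finset (Fin n), t ∈ P ↔ t.card = 2 := by
    intro t; simp [hPdef, Finset.mem_powersetCard]
  have hPcard : P.card = n.choose 2 := by
    rw [hPdef, Finset.card_powersetCard, Finset.card_univ, Fintype.card_fin]
  set fib : Fin C → Finset (Finset (Fin n)) :=
    fun c => P.filter (fun e => χ e = c) with hfib
  -- fibers have at most 2 elements
  have fiber_le_two : ∀ c, (fib c).card ≤ 2 := by
    intro c
    by_contra hlt
    push_neg at hlt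
    obtain ⟨t, hts, htc⟩ := Finset.exists_subset_card_eq hlt
    obtain ⟨a, b, c', hab, hac, hbc, rfl⟩ := Finset.card_eq_three.1 htc
    have ha : a ∈ fib c := hts (by simp)
    have hb : b ∈ fib c := hts (by simp)
    have hc : c' ∈ fib c := hts (by simp)
    simp only [hfib, Finset.mem_filter, hmemP] at ha hb hc
    refine core6 hn hχ ha.1 hc.1 hb.1 hc.1 (ha.2.trans hc.2.symm)
      (hb.2.trans hc.2.symm) hab (Ne.symm hac) (Ne.symm hbc) (Ne.symm hac) (Ne.symm hbc) ?_
    have hsub : a ∪ c' ∪ b ∪ c' ⊆ a ∪ b ∪ c' := by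
      intro x hx; simp only [Finset.mem_union] at hx ⊢; tauto
    calc (a ∪ c' ∪ b ∪ c').card ≤ (a ∪ b ∪ c').card := Finset.card_le_card hsub
      _ ≤ (a ∪ b).card + c'.card := Finset.card_union_le _ _
      _ ≤ a.card + b.card + c'.card := by
          have := Finset.card_union_le a b; omega
      _ ≤ 6 := by rw [ha.1, hb.1, hc.1]
  -- doubled colors
  set B : Finset (Fin C) := (univ : Finset (Fin C)).filter (fun c => 2 ≤ (fib c).card)
    with hBdef
  -- structure of doubled fibers
  have hBstruct : ∀ c ∈ B, ∃ e f : Finset (Fin n), e.card = 2 ∧ f.card = 2 ∧ e ≠ f ∧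
      χ e = c ∧ χ f = c ∧ fib c = {e, f} := by
    intro c hc
    have h2 : (fib c).card = 2 :=
      le_antisymm (fiber_le_two c) ((Finset.mem_filter.1 hc).2)
    obtain ⟨e, f, hef, hfibc⟩ := Finset.card_eq_two.1 h2
    have he : e ∈ fib c := by rw [hfibc]; simp
    have hf : f ∈ fib c := by rw [hfibc]; simp
    simp only [hfib, Finset.mem_filter, hmemP] at he hf
    exact ⟨e, f, he.1, hf.1, hef, he.2, hf.2, hfibc⟩
  set Q : Fin C → Finset (Fin n) := fun c => (fib c).sup id with hQdef
  have hQeq : ∀ c, ∀ e f : Finset (Fin n), fib c = {e, f} → Q c = e ∪ f := by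
    intro c e f hc
    rw [hQdef]; simp [hc, Finset.sup_insert, Finset.sup_singleton]
  have hQcard : ∀ c ∈ B, 3 ≤ (Q c).card ∧ (Q c).card ≤ 4 := by
    intro c hc
    obtain ⟨e, f, he, hf, hef, -, -, hfibc⟩ := hBstruct c hc
    rw [hQeq c e f hfibc]
    constructor
    · by_contra hlt
      push_neg at hlt
      have h1 : e ⊆ e ∪ f := Finset.subset_union_left
      have h2 : f ⊆ e ∪ f := Finset.subset_union_right
      have he' : e = e ∪ f := Finset.eq_of_subset_of_card_le h1 (by omega)
      have hf' : f = e ∪ f := Finset.eq_of_subset_of_card_le h2 (by omega)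
      exact hef (he'.trans hf'.symm)
    · have := Finset.card_union_le e f; omega
  -- two doubled colors have far-apart supports
  have hSeven : ∀ c ∈ B, ∀ c' ∈ B, c ≠ c' → 7 ≤ (Q c ∪ Q c').card := by
    intro c hc c' hc' hne
    obtain ⟨e, f, he, hf, hef, hχe, hχf, hfibc⟩ := hBstruct c hc
    obtain ⟨g, h, hg, hh, hgh, hχg, hχh, hfibc'⟩ := hBstruct c' hc'
    rw [hQeq c e f hfibc, hQeq c' g h hfibc']
    by_contra hlt
    push_neg at hlt
    have hA : (e ∪ f ∪ g ∪ h).card ≤ 6 := by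
      rw [Finset.union_assoc (e ∪ f) g h]; omega
    refine core6 hn hχ he hf hg hh (hχe.trans hχf.symm) (hχg.trans hχh.symm)
      (fun hx => hne (by rw [← hχe, hx, hχg])) hef.symm
      (fun hx => hne.symm (by rw [← hχg, ← hx, hχf]))
      (fun hx => hne.symm (by rw [← hχh, hx, hχe]))
      hgh.symm hA
  have hInter : ∀ c ∈ B, ∀ c' ∈ B, c ≠ c' → (Q c ∩ Q c').card ≤ 1 := by
    intro c hc c' hc' hne
    have h7 := hSeven c hc c' hc' hne
    have hu := Finset.card_union_add_card_inter (Q c) (Q c')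
    have h1 := (hQcard c hc).2
    have h2 := (hQcard c' hc').2
    omega
  set pr : Fin C → Finset (Finset (Fin n)) := fun c => (Q c).powersetCard 2 with hprdef
  have hprP : ∀ c, pr c ⊆ P := by
    intro c t ht
    rw [hmemP]; exact (Finset.mem_powersetCard.1 ht).2
  have hprcard : ∀ c, (pr c).card = (Q c).card.choose 2 :=
    fun c => Finset.card_powersetCard _ _
  have hprdisj : ∀ c ∈ B, ∀ c' ∈ B, c ≠ c' → Disjoint (pr c) (pr c') := by
    intro c hc c' hc' hne
    rw [Finset.disjoint_left]
    intro t ht ht'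
    have h1 := Finset.mem_powersetCard.1 ht
    have h2 := Finset.mem_powersetCard.1 ht'
    have h3 := Finset.card_le_card (Finset.subset_inter h1.1 h2.1)
    have h4 := hInter c hc c' hc' hne
    omega
  have hbU : B.biUnion pr ⊆ P := Finset.biUnion_subset.2 fun c _ => hprP c
  have hbUcard : (B.biUnion pr).card = ∑ c ∈ B, (pr c).card :=
    Finset.card_biUnion hprdisj
  have key : 6 * B.card ≤ P.card := by
    by_cases hall : ∀ c ∈ B, (Q c).card = 4
    · have hsum : ∑ c ∈ B, (pr c).card = 6 * B.card := by
        rw [Finset.sum_congr rfl (fun c hc => by rw [hprcard, hall c hc]),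
          Finset.sum_const, smul_eq_mul, show Nat.choose 4 2 = 6 from rfl, mul_comm]
      have := Finset.card_le_card hbU
      omega
    · push_neg at hall
      obtain ⟨c0, hc0B, hc0⟩ := hall
      have hQ3 : (Q c0).card = 3 := by have := hQcard c0 hc0B; omega
      have hothers : ∀ c ∈ B, c ≠ c0 → (Q c).card = 4 ∧ Disjoint (Q c) (Q c0) := by
        intro c hc hne
        have h7 := hSeven c hc c0 hc0B hne
        have hu := Finset.card_union_add_card_inter (Q c) (Q c0)
        have h4 := (hQcard c hc).2
        have h40 : (Q c).card = 4 := by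
          have := Finset.card_union_le (Q c) (Q c0); omega
        refine ⟨h40, ?_⟩
        rw [Finset.disjoint_iff_inter_eq_empty, ← Finset.card_eq_zero]
        omega
      have hdne : ((Q c0)ᶜ).Nonempty := by
        rw [← Finset.card_pos, Finset.card_compl, hQ3, Fintype.card_fin]
        omega
      obtain ⟨d, hd⟩ := hdne
      have hd' : d ∉ Q c0 := Finset.mem_compl.1 hd
      set X : Finset (Finset (Fin n)) := (Q c0).image (fun x => insert d {x}) with hXdef
      have hXcard : X.card = 3 := by
        rw [hXdef, Finset.card_image_of_injOn, hQ3]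
        intro x hx y hy hxy
        have hxy' : (insert d {x} : Finset (Fin n)) = insert d {y} := hxy
        have hxmem : x ∈ insert d ({y} : Finset (Fin n)) := by
          rw [← hxy']; simp
        rcases Finset.mem_insert.1 hxmem with h | h
        · exact absurd (h ▸ hx) hd'
        · exact Finset.mem_singleton.1 h
      have hXP : X ⊆ P := by
        intro t ht
        obtain ⟨x, hx, rfl⟩ := Finset.mem_image.1 ht
        rw [hmemP, Finset.card_insert_of_notMem (by
          simp only [Finset.mem_singleton]
          exact fun h => hd' (h ▸ hx))]
        simp
      have hXdisj : Disjoint (B.biUnion pr) X := by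
        rw [Finset.disjoint_right]
        intro t ht htb
        obtain ⟨x, hx, rfl⟩ := Finset.mem_image.1 ht
        obtain ⟨c, hc, htc⟩ := Finset.mem_biUnion.1 htb
        have hsub := (Finset.mem_powersetCard.1 htc).1
        by_cases hcc : c = c0
        · exact hd' (hcc ▸ hsub (Finset.mem_insert_self _ _))
        · have := (hothers c hc hcc).2
          exact (Finset.disjoint_right.1 this hx)
            (hsub (Finset.mem_insert.2 (Or.inr (Finset.mem_singleton_self x))))
      have hsumerase : ∑ c ∈ B.erase c0, (pr c).card = 6 * (B.erase c0).card := by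
        rw [Finset.sum_congr rfl (fun c hc => by
          rw [hprcard, (hothers c (Finset.mem_of_mem_erase hc)
            (Finset.ne_of_mem_erase hc)).1]),
          Finset.sum_const, smul_eq_mul, show Nat.choose 4 2 = 6 from rfl, mul_comm]
      have hsumtot : ∑ c ∈ B.erase c0, (pr c).card + (pr c0).card = ∑ c ∈ B, (pr c).card :=
        Finset.sum_erase_add B _ hc0B
      have hprc0 : (pr c0).card = 3 := by rw [hprcard, hQ3]; rfl
      have hec : (B.erase c0).card = B.card - 1 := Finset.card_erase_of_mem hc0B
      have hBpos : 1 ≤ B.card := Finset.card_pos.2 ⟨c0, hc0B⟩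
      have hfin : (B.biUnion pr ∪ X).card ≤ P.card :=
        Finset.card_le_card (Finset.union_subset hbU hXP)
      rw [Finset.card_union_of_disjoint hXdisj, hbUcard, hXcard] at hfin
      omega
  -- number of colors bound
  have hfibsum : P.card = ∑ c ∈ (univ : Finset (Fin C)), (fib c).card :=
    Finset.card_eq_sum_card_fiberwise (fun e _ => Finset.mem_univ (χ e))
  have hbound : ∑ c ∈ (univ : Finset (Fin C)), (fib c).card ≤
      ∑ c ∈ (univ : Finset (Fin C)), (1 + if 2 ≤ (fib c).card then 1 else 0) := by
    refine Finset.sum_le_sum fun c _ => ?_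
    have := fiber_le_two c
    split_ifs with h <;> omega
  have hite : ∑ c ∈ (univ : Finset (Fin C)), (1 + if 2 ≤ (fib c).card then 1 else 0)
      = C + B.card := by
    rw [Finset.sum_add_distrib, Finset.sum_const, Finset.card_univ, Fintype.card_fin,
      smul_eq_mul, mul_one, hBdef, Finset.card_filter]
  have hPle : P.card ≤ C + B.card := by
    rw [hfibsum]; exact hbound.trans hite.le
  rw [← hPcard]
  have h1 : (P.card : ℝ) ≤ (C : ℝ) + (B.card : ℝ) := by exact_mod_cast hPle
  have h2 : 6 * (B.card : ℝ) ≤ (P.card : ℝ) := by exact_mod_cast key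
  linarith

/-- For every integer `n ≥ 6`, `f(n, 6, 14) ≥ (5/6) * C(n,2)`. -/
theorem stmt_8 (n : ℕ) (hn : 6 ≤ n) :
    (5 / 6 : ℝ) * (n.choose 2 : ℝ) ≤ (genRamsey n 6 14 : ℝ) := by
  classical
  set T := {C : ℕ | ∃ χ : Finset (Fin n) → Fin C,
    ∀ S : Finset (Fin n), S.card = 6 → 14 ≤ (colorsIn χ S).card} with hT
  have hchoose_pos : 0 < n.choose 2 := Nat.choose_pos (by omega)
  have hTne : T.Nonempty := by
    refine ⟨n.choose 2, ?_⟩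
    set P : Finset (Finset (Fin n)) := (univ : Finset (Fin n)).powersetCard 2 with hPdef
    have hPcard : P.card = n.choose 2 := by
      rw [hPdef, Finset.card_powersetCard, Finset.card_univ, Fintype.card_fin]
    refine ⟨fun e => if h : e ∈ P then Fin.cast hPcard (P.equivFin ⟨e, h⟩)
      else ⟨0, hchoose_pos⟩, ?_⟩
    intro S hS
    have hsub : S.powersetCard 2 ⊆ P := by
      intro t ht
      rw [hPdef, Finset.mem_powersetCard]
      exact ⟨Finset.subset_univ t, (Finset.mem_powersetCard.1 ht).2⟩
    have hinj : Set.InjOn (fun e => if h : e ∈ P then Fin.cast hPcard (P.equivFin ⟨e, h⟩)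
        else ⟨0, hchoose_pos⟩) (S.powersetCard 2) := by
      intro a ha b hb hab
      have ha' := hsub ha
      have hb' := hsub hb
      simp only [dif_pos ha', dif_pos hb'] at hab
      have : P.equivFin ⟨a, ha'⟩ = P.equivFin ⟨b, hb'⟩ := by
        apply Fin.ext
        exact congrArg Fin.val (congrArg (Fin.cast hPcard.symm) hab)
      have := P.equivFin.injective this
      exact congrArg Subtype.val this
    have : (colorsIn (fun e => if h : e ∈ P then Fin.cast hPcard (P.equivFin ⟨e, h⟩)
        else ⟨0, hchoose_pos⟩) S).card = 15 := by
      rw [colorsIn, Finset.card_image_of_injOn hinj, Finset.card_powersetCard, hS]; rfl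
    omega
  have hmem : genRamsey n 6 14 ∈ T := Nat.sInf_mem hTne
  obtain ⟨χ, hχ⟩ := hmem
  exact main6 hn χ hχ
end

section
/- For every integer ℓ ≥ 3 and every n ≥ 2ℓ, f(n, 2ℓ, binom(2ℓ,2) − ℓ + 2) ≥ binom(n,2) − G⁽⁴⁾(n; 2ℓ, ℓ−1). -/
open Finset

lemma hK_aux {ℓ : ℕ} (hℓ : 1 ≤ ℓ) : ℓ ≤ (2 * ℓ).choose 2 := by
  rw [Nat.choose_two_right]
  have h1 : 2 * ℓ * (2 * ℓ - 1) = 2 * (ℓ * (2 * ℓ - 1)) := by rw [mul_assoc]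
  rw [h1, Nat.mul_div_cancel_left _ (by norm_num)]
  exact Nat.le_mul_of_pos_right ℓ (by omega)

noncomputable def pad4 {n : ℕ} (u : Finset (Fin n)) : Finset (Fin n) :=
  if h : u.card ≤ 4 ∧ 4 ≤ n then
    (Finset.exists_superset_card_eq h.1 (by simpa using h.2)).choose
  else u

lemma pad4_spec {n : ℕ} {u : Finset (Fin n)} (h1 : u.card ≤ 4) (h2 : 4 ≤ n) :
    u ⊆ pad4 u ∧ (pad4 u).card = 4 := by
  rw [pad4, dif_pos ⟨h1, h2⟩]
  exact (Finset.exists_superset_card_eq (And.intro h1 h2).1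
    (by simpa using (And.intro h1 h2).2)).choose_spec

noncomputable def rep {n C : ℕ} (χ : Finset (Fin n) → Fin C) (c : Fin C) : Finset (Fin n) :=
  if h : (((univ : Finset (Fin n)).powersetCard 2).filter (fun e => χ e = c)).Nonempty
  then h.choose else ∅

lemma rep_spec {n C : ℕ} (χ : Finset (Fin n) → Fin C) {e : Finset (Fin n)}
    (he : e ∈ (univ : Finset (Fin n)).powersetCard 2) :
    rep χ (χ e) ∈ (univ : Finset (Fin n)).powersetCard 2 ∧ χ (rep χ (χ e)) = χ e := by
  have h : (((univ : Finset (Fin n)).powersetCard 2).filter (fun f => χ f = χ e)).Nonempty :=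
    ⟨e, mem_filter.mpr ⟨he, rfl⟩⟩
  rw [rep, dif_pos h]
  have := h.choose_spec
  rw [mem_filter] at this
  exact this

lemma gvalBddAbove (n s k r : ℕ) (hrs : r ≤ s) (hsn : s ≤ n) :
    BddAbove {m : ℕ | ∃ μ : Finset (Fin n) → ℕ,
      (∀ e, μ e ≠ 0 → e.card = r) ∧
      (∀ S : Finset (Fin n), S.card = s → ∑ e ∈ S.powersetCard r, μ e < k) ∧
      ∑ e ∈ (univ : Finset (Fin n)).powersetCard r, μ e = m} := by
  classical
  refine ⟨((univ : Finset (Fin n)).powersetCard s).card * k, ?_⟩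
  rintro m ⟨μ, hμr, hμS, rfl⟩
  set g : Finset (Fin n) → Finset (Fin n) := fun f =>
    if h : f.card ≤ s then (Finset.exists_superset_card_eq h (by simpa using hsn)).choose
    else ∅ with hg
  have hgspec : ∀ f ∈ (univ : Finset (Fin n)).powersetCard r, f ⊆ g f ∧ (g f).card = s := by
    intro f hf
    have hfc : f.card ≤ s := by rw [mem_powersetCard_univ.mp hf]; exact hrs
    rw [hg]
    simp only [dif_pos hfc]
    exact (Finset.exists_superset_card_eq hfc (by simpa using hsn)).choose_spec
  have hgmem : ∀ f ∈ (univ : Finset (Fin n)).powersetCard r,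
      g f ∈ (univ : Finset (Fin n)).powersetCard s := fun f hf =>
    mem_powersetCard_univ.mpr (hgspec f hf).2
  calc ∑ f ∈ (univ : Finset (Fin n)).powersetCard r, μ f
      = ∑ S ∈ (univ : Finset (Fin n)).powersetCard s,
          ∑ f ∈ ((univ : Finset (Fin n)).powersetCard r).filter (fun f => g f = S), μ f :=
        (sum_fiberwise_of_maps_to hgmem μ).symm
    _ ≤ ∑ S ∈ (univ : Finset (Fin n)).powersetCard s, k := by
        refine sum_le_sum fun S hS => ?_
        have hsub : ((univ : Finset (Fin n)).powersetCard r).filter (fun f => g f = S)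
            ⊆ S.powersetCard r := by
          intro f hf
          obtain ⟨hf1, hf2⟩ := mem_filter.mp hf
          exact mem_powersetCard.mpr ⟨hf2 ▸ (hgspec f hf1).1, mem_powersetCard_univ.mp hf1⟩
        exact le_of_lt (lt_of_le_of_lt
          (sum_le_sum_of_subset hsub) (hμS S (mem_powersetCard_univ.mp hS)))
    _ = ((univ : Finset (Fin n)).powersetCard s).card * k := by
        rw [sum_const, smul_eq_mul]

set_option maxHeartbeats 2000000 in
lemma key_count (ℓ n C : ℕ) (hℓ : 3 ≤ ℓ) (hn : 2 * ℓ ≤ n)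
    (χ : Finset (Fin n) → Fin C)
    (hχ : ∀ S : Finset (Fin n), S.card = 2 * ℓ →
      (2 * ℓ).choose 2 - ℓ + 2 ≤ (colorsIn χ S).card) :
    n.choose 2 ≤ C +
      sSup {m : ℕ | ∃ μ : Finset (Fin n) → ℕ,
        (∀ e, μ e ≠ 0 → e.card = 4) ∧
        (∀ S : Finset (Fin n), S.card = 2 * ℓ →
          ∑ e ∈ S.powersetCard 4, μ e < ℓ - 1) ∧
        ∑ e ∈ (univ : Finset (Fin n)).powersetCard 4, μ e = m} := by
  classical
  have hn4 : 4 ≤ n := by omega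
  set P : Finset (Finset (Fin n)) := (univ : Finset (Fin n)).powersetCard 2 with hPdef
  have hPcard : P.card = n.choose 2 := by
    rw [hPdef, card_powersetCard, card_univ, Fintype.card_fin]
  set r : Fin C → Finset (Fin n) := rep χ with hrdef
  set W : Finset (Finset (Fin n)) := P.filter (fun e => ¬ e = r (χ e)) with hWdef
  set w : Finset (Fin n) → Finset (Fin n) := fun e => pad4 (r (χ e) ∪ e) with hwdef
  set μ : Finset (Fin n) → ℕ := fun f => (W.filter (fun e => w e = f)).card with hμdef
  have hrep : ∀ e ∈ P, r (χ e) ∈ P ∧ χ (r (χ e)) = χ e := fun e he => rep_spec χ he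
  have hcard2 : ∀ e ∈ P, e.card = 2 := fun e he => mem_powersetCard_univ.mp he
  have hWspec : ∀ e ∈ W, r (χ e) ∪ e ⊆ w e ∧ (w e).card = 4 := by
    intro e he
    obtain ⟨heP, hne⟩ := mem_filter.mp he
    have hu : (r (χ e) ∪ e).card ≤ 4 := by
      calc (r (χ e) ∪ e).card ≤ (r (χ e)).card + e.card := card_union_le _ _
        _ ≤ 4 := by rw [hcard2 _ heP, hcard2 _ (hrep e heP).1]
    exact pad4_spec hu hn4
  -- total sum of μ equals W.card
  have htot : ∑ f ∈ (univ : Finset (Fin n)).powersetCard 4, μ f = W.card := by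
    rw [hμdef]
    exact (card_eq_sum_card_fiberwise (fun e he =>
      mem_powersetCard_univ.mpr (hWspec e he).2)).symm
  -- μ is 4-uniform
  have hμ4 : ∀ f, μ f ≠ 0 → f.card = 4 := by
    intro f hf
    obtain ⟨e, he⟩ := card_pos.mp (Nat.pos_of_ne_zero hf)
    obtain ⟨heW, hwe⟩ := mem_filter.mp he
    rw [← hwe]
    exact (hWspec e heW).2
  -- the sparseness condition
  have hcond : ∀ S : Finset (Fin n), S.card = 2 * ℓ →
      ∑ f ∈ S.powersetCard 4, μ f < ℓ - 1 := by
    intro S hS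
    set s : Finset (Finset (Fin n)) := W.filter (fun e => w e ⊆ S) with hsdef
    have hmapsto : ∀ e ∈ s, w e ∈ S.powersetCard 4 := by
      intro e he
      obtain ⟨heW, hwS⟩ := mem_filter.mp he
      exact mem_powersetCard.mpr ⟨hwS, (hWspec e heW).2⟩
    have hsum : ∑ f ∈ S.powersetCard 4, μ f = s.card := by
      rw [card_eq_sum_card_fiberwise hmapsto]
      refine sum_congr rfl fun f hf => ?_
      have hfS : f ⊆ S := (mem_powersetCard.mp hf).1
      refine congrArg Finset.card ?_
      ext e
      simp only [hμdef, hsdef, mem_filter, and_assoc]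
      constructor
      · rintro ⟨h1, h2⟩; exact ⟨h1, h2 ▸ hfS, h2⟩
      · rintro ⟨h1, _, h3⟩; exact ⟨h1, h3⟩
    set ES : Finset (Finset (Fin n)) := S.powersetCard 2 with hESdef
    have hsES : ∀ e ∈ s, e ∈ ES ∧ r (χ e) ∈ ES ∧ ¬ e = r (χ e) := by
      intro e he
      obtain ⟨heW, hwS⟩ := mem_filter.mp he
      obtain ⟨heP, hne⟩ := mem_filter.mp heW
      have hsub := (hWspec e heW).1
      have heS : e ⊆ S := fun x hx => hwS (hsub (mem_union_right _ hx))
      have hrS : r (χ e) ⊆ S := fun x hx => hwS (hsub (mem_union_left _ hx))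
      exact ⟨mem_powersetCard.mpr ⟨heS, hcard2 _ heP⟩,
        mem_powersetCard.mpr ⟨hrS, hcard2 _ (hrep e heP).1⟩, hne⟩
    have hmaps2 : ∀ e ∈ s, χ e ∈ colorsIn χ S := fun e he =>
      mem_image_of_mem χ (hsES e he).1
    have h1 : s.card = ∑ c ∈ colorsIn χ S, (s.filter (fun e => χ e = c)).card :=
      card_eq_sum_card_fiberwise hmaps2
    have h2 : ES.card = ∑ c ∈ colorsIn χ S, (ES.filter (fun e => χ e = c)).card :=
      card_eq_sum_card_fiberwise (fun e he => mem_image_of_mem χ he)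
    have h3 : ∀ c ∈ colorsIn χ S,
        (s.filter (fun e => χ e = c)).card + 1 ≤ (ES.filter (fun e => χ e = c)).card := by
      intro c hc
      rcases (s.filter (fun e => χ e = c)).eq_empty_or_nonempty with h | h
      · rw [h, card_empty]
        obtain ⟨e, he, hce⟩ := mem_image.mp hc
        exact card_pos.mpr ⟨e, mem_filter.mpr ⟨he, hce⟩⟩
      · obtain ⟨e0, he0⟩ := h
        obtain ⟨he0s, he0c⟩ := mem_filter.mp he0
        have he0W : e0 ∈ W := (mem_filter.mp he0s).1
        have he0P : e0 ∈ P := (mem_filter.mp he0W).1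
        have hrc_mem : r c ∈ ES.filter (fun e => χ e = c) := by
          have h4 := (hsES e0 he0s).2.1
          have h5 := (hrep e0 he0P).2
          rw [he0c] at h4 h5
          exact mem_filter.mpr ⟨h4, h5⟩
        have hsubset : s.filter (fun e => χ e = c)
            ⊆ (ES.filter (fun e => χ e = c)).erase (r c) := by
          intro e he
          obtain ⟨hes, hec⟩ := mem_filter.mp he
          obtain ⟨heES, _, hene⟩ := hsES e hes
          refine mem_erase.mpr ⟨?_, mem_filter.mpr ⟨heES, hec⟩⟩
          intro hcontra
          exact hene (by rw [hec]; exact hcontra)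
        calc (s.filter (fun e => χ e = c)).card + 1
            ≤ ((ES.filter (fun e => χ e = c)).erase (r c)).card + 1 :=
              Nat.add_le_add_right (card_le_card hsubset) 1
          _ = (ES.filter (fun e => χ e = c)).card :=
              card_erase_add_one (mem_filter.mp hrc_mem |> fun h => hrc_mem)
    have hsum2 : s.card + (colorsIn χ S).card ≤ ES.card := by
      calc s.card + (colorsIn χ S).card
          = ∑ c ∈ colorsIn χ S, ((s.filter (fun e => χ e = c)).card + 1) := by
            rw [sum_add_distrib, sum_const, smul_eq_mul, mul_one, ← h1]
        _ ≤ ∑ c ∈ colorsIn χ S, (ES.filter (fun e => χ e = c)).card := sum_le_sum h3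
        _ = ES.card := h2.symm
    have hEScard : ES.card = (2 * ℓ).choose 2 := by
      rw [hESdef, card_powersetCard, hS]
    have hq := hχ S hS
    have hKge : ℓ ≤ (2 * ℓ).choose 2 := hK_aux (by omega)
    rw [hsum]
    omega
  -- representatives injective into colors
  have hreps : (P.filter (fun e => e = r (χ e))).card ≤ C := by
    have hinj : Set.InjOn χ (P.filter (fun e => e = r (χ e))) := by
      intro e he e' he' hee
      simp only [coe_filter, Set.mem_setOf_eq] at he he'
      rw [he.2, he'.2, hee]
    calc (P.filter (fun e => e = r (χ e))).card
        ≤ (univ : Finset (Fin C)).card :=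
          card_le_card_of_injOn χ (fun a _ => mem_univ _) hinj
      _ = C := by rw [card_univ, Fintype.card_fin]
  have hsplit : (P.filter (fun e => e = r (χ e))).card + W.card = P.card := by
    rw [hWdef]
    exact card_filter_add_card_filter_not (fun e => e = r (χ e))
  have hWG : W.card ≤ sSup {m : ℕ | ∃ μ : Finset (Fin n) → ℕ,
      (∀ e, μ e ≠ 0 → e.card = 4) ∧
      (∀ S : Finset (Fin n), S.card = 2 * ℓ →
        ∑ e ∈ S.powersetCard 4, μ e < ℓ - 1) ∧
      ∑ e ∈ (univ : Finset (Fin n)).powersetCard 4, μ e = m} :=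
    le_csSup (gvalBddAbove n (2 * ℓ) (ℓ - 1) 4 (by omega) hn) ⟨μ, hμ4, hcond, htot⟩
  calc n.choose 2 = (P.filter (fun e => e = r (χ e))).card + W.card := by
        rw [hsplit, hPcard]
    _ ≤ _ := add_le_add hreps hWG

lemma ramsey_set_nonempty (ℓ n : ℕ) (hℓ : 3 ≤ ℓ) :
    {C : ℕ | ∃ χ : Finset (Fin n) → Fin C,
      ∀ S : Finset (Fin n), S.card = 2 * ℓ →
        (2 * ℓ).choose 2 - ℓ + 2 ≤ (colorsIn χ S).card}.Nonempty := by
  classical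
  refine ⟨Fintype.card (Finset (Fin n)), ⇑(Fintype.equivFin (Finset (Fin n))), ?_⟩
  intro S hS
  have h1 : (colorsIn (⇑(Fintype.equivFin (Finset (Fin n)))) S).card
      = (2 * ℓ).choose 2 := by
    rw [colorsIn, card_image_of_injective _ (Equiv.injective _), card_powersetCard, hS]
  have h2 : ℓ ≤ (2 * ℓ).choose 2 := hK_aux (by omega)
  omega

/-- For every `ℓ ≥ 3` and `n ≥ 2ℓ`,
`f(n, 2ℓ, C(2ℓ,2) - ℓ + 2) ≥ C(n,2) - G⁽⁴⁾(n; 2ℓ, ℓ-1)`. -/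
theorem stmt_12 (ℓ : ℕ) (hℓ : 3 ≤ ℓ) (n : ℕ) (hn : 2 * ℓ ≤ n) :
    (n.choose 2 : ℝ) - (Gval 4 n (2 * ℓ) (ℓ - 1) : ℝ) ≤
      (genRamsey n (2 * ℓ) ((2 * ℓ).choose 2 - ℓ + 2) : ℝ) := by
  obtain ⟨χ, hχ⟩ := Nat.sInf_mem (ramsey_set_nonempty ℓ n hℓ)
  have hkey := key_count ℓ n _ hℓ hn χ hχ
  have h2 : n.choose 2 ≤ genRamsey n (2 * ℓ) ((2 * ℓ).choose 2 - ℓ + 2)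
      + Gval 4 n (2 * ℓ) (ℓ - 1) := by
    unfold genRamsey Gval
    exact hkey
  have h3 : (n.choose 2 : ℝ) ≤ (genRamsey n (2 * ℓ) ((2 * ℓ).choose 2 - ℓ + 2) : ℝ)
      + (Gval 4 n (2 * ℓ) (ℓ - 1) : ℝ) := by exact_mod_cast h2
  linarith
end

section
/- For every integer ℓ ≥ 3 and every n ≥ 2ℓ, there exists an edge-coloring of K_n using exactly binom(n,2) − H⁽⁴⁾(n; 2ℓ, ℓ−1) colors in which every set of 2ℓ vertices spans at least binom(2ℓ,2) − ℓ + 2 distinct colors, every color is used on at most two edges, and no two edges sharing a vertex receive the same color. In particular, f(n, 2ℓ, binom(2ℓ,2) − ℓ + 2) ≤ binom(n,2) − H⁽⁴⁾(n; 2ℓ, ℓ−1). -/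
open Finset

section Core
variable {n ℓ : ℕ}

def Cft {n : ℕ} (a b : Finset (Fin n)) : Prop := a ≠ b ∧ 2 ≤ (a ∩ b).card

lemma rel_symm {a b : Finset (Fin n)} (h : Cft a b) : Cft b a :=
  ⟨h.1.symm, by rw [inter_comm]; exact h.2⟩

/-- union of a list of finsets -/
def LU {n : ℕ} (L : List (Finset (Fin n))) : Finset (Fin n) := L.foldr (· ∪ ·) ∅

lemma subset_LU {L : List (Finset (Fin n))} {x : Finset (Fin n)} (hx : x ∈ L) :
    x ⊆ LU L := by
  induction L with
  | nil => simp at hx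
  | cons y t ih =>
    rcases List.mem_cons.mp hx with rfl | h
    · exact subset_union_left
    · exact (ih h).trans subset_union_right

variable (hℓ : 3 ≤ ℓ) (hn : 2*ℓ ≤ n) (E : Finset (Finset (Fin n)))
  (h4 : ∀ e ∈ E, e.card = 4)
  (hf1 : IsSKFree (2*ℓ) (ℓ-1) E)
  (hf2 : ∀ i, 2 ≤ i → i ≤ ℓ-2 → IsSKFree (2*i+1) i E)

include hℓ hn h4 hf1 hf2

lemma viol (F : Finset (Finset (Fin n))) (hFE : F ⊆ E) (W : Finset (Fin n))
    (hsub : ∀ f ∈ F, f ⊆ W) (hj : 2 ≤ F.card)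
    (hc : (F.card ≤ ℓ - 2 ∧ W.card ≤ 2*F.card+1) ∨ (F.card = ℓ-1 ∧ W.card ≤ 2*ℓ)) :
    False := by
  classical
  have key : ∀ s : ℕ, W.card ≤ s → s ≤ n →
      ∃ S : Finset (Fin n), S.card = s ∧ F ⊆ E.filter (fun e => e ⊆ S) := by
    intro s hWs hsn
    obtain ⟨S, hWS, hScard⟩ := Finset.exists_superset_card_eq hWs (by simpa using hsn)
    exact ⟨S, hScard, fun f hf => mem_filter.mpr ⟨hFE hf, (hsub f hf).trans hWS⟩⟩
  rcases hc with ⟨h1, h2⟩ | ⟨h1, h2⟩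
  · obtain ⟨S, hScard, hFsub⟩ := key (2*F.card+1) h2 (by omega)
    have := hf2 F.card hj h1 S hScard
    have := Finset.card_le_card hFsub
    omega
  · obtain ⟨S, hScard, hFsub⟩ := key (2*ℓ) h2 (by omega)
    have := hf1 S hScard
    have := Finset.card_le_card hFsub
    omega

lemma conf {e f : Finset (Fin n)} (he : e ∈ E) (hf : f ∈ E) (hR : Cft e f) :
    (e ∩ f).card = 2 := by
  classical
  by_contra hc
  have h3 : 3 ≤ (e ∩ f).card := by
    have := hR.2; omega
  have hcup : (e ∪ f).card ≤ 5 := by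
    have := Finset.card_union_add_card_inter e f
    have := h4 e he; have := h4 f hf
    omega
  have hFc : ({e, f} : Finset (Finset (Fin n))).card = 2 := by
    rw [card_insert_of_notMem (by simpa using hR.1), card_singleton]
  have hsub : ∀ g ∈ ({e, f} : Finset (Finset (Fin n))), g ⊆ e ∪ f := by
    intro g hg
    rcases mem_insert.mp hg with rfl | hg
    · exact subset_union_left
    · rw [mem_singleton.mp hg]; exact subset_union_right
  refine viol hℓ hn E h4 hf1 hf2 {e, f} ?_ (e ∪ f) hsub (by omega) ?_
  · intro g hg
    rcases mem_insert.mp hg with rfl | hg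
    · exact he
    · rw [mem_singleton.mp hg]; exact hf
  · by_cases h3' : ℓ = 3
    · right; constructor <;> omega
    · left; constructor <;> omega

lemma pathspan (L : List (Finset (Fin n))) (hch : L.Chain' (Cft (n := n)))
    (hE : ∀ x ∈ L, x ∈ E) : (LU L).card ≤ 2*L.length + 2 := by
  classical
  induction L with
  | nil => simp [LU]
  | cons x t ih =>
    cases t with
    | nil =>
      have : LU [x] = x := by simp [LU]
      rw [this]
      have := h4 x (hE x (by simp))
      simp; omega
    | cons y t' =>
      have hRxy : Cft x y := (List.isChain_cons_cons.mp hch).1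
      have hch' : List.Chain' (Cft (n:=n)) (y :: t') := (List.isChain_cons_cons.mp hch).2
      have hE' : ∀ z ∈ (y :: t'), z ∈ E := fun z hz => hE z (List.mem_cons_of_mem _ hz)
      have ihy := ih hch' hE'
      have hLU : LU (x :: y :: t') = x ∪ LU (y :: t') := rfl
      have hy : y ⊆ LU (y :: t') := subset_LU (by simp)
      have hsub : x ∪ LU (y :: t') ⊆ (x \ y) ∪ LU (y :: t') := by
        intro v hv
        rcases mem_union.mp hv with hvx | hvr
        · by_cases hvy : v ∈ y
          · exact mem_union.mpr (Or.inr (hy hvy))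
          · exact mem_union.mpr (Or.inl (mem_sdiff.mpr ⟨hvx, hvy⟩))
        · exact mem_union.mpr (Or.inr hvr)
      have hxy2 : (x \ y).card ≤ 2 := by
        have h1 := Finset.card_sdiff_add_card_inter x y
        have := h4 x (hE x (by simp))
        have h2 : (x ∩ y).card = 2 := conf hℓ hn E h4 hf1 hf2 (hE x (by simp))
          (hE y (by simp)) hRxy
        omega
      calc (LU (x :: y :: t')).card ≤ ((x \ y) ∪ LU (y :: t')).card := by
            rw [hLU]; exact Finset.card_le_card hsub
        _ ≤ (x \ y).card + (LU (y :: t')).card := Finset.card_union_le _ _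
        _ ≤ 2 + (2*(y::t').length + 2) := by omega
        _ ≤ 2*(x :: y :: t').length + 2 := by simp [List.length_cons]; omega

end Core

section Core2
variable {n ℓ : ℕ}
variable (hℓ : 3 ≤ ℓ) (hn : 2*ℓ ≤ n) (E : Finset (Finset (Fin n)))
  (h4 : ∀ e ∈ E, e.card = 4)
  (hf1 : IsSKFree (2*ℓ) (ℓ-1) E)
  (hf2 : ∀ i, 2 ≤ i → i ≤ ℓ-2 → IsSKFree (2*i+1) i E)

include hℓ hn h4 hf1 hf2

lemma cycle (e t f : Finset (Fin n)) (A : List (Finset (Fin n)))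
    (hE : ∀ x ∈ (e :: t :: (A ++ [f])), x ∈ E)
    (hch : List.Chain' (Cft (n := n)) (e :: t :: (A ++ [f])))
    (hnd : (e :: t :: (A ++ [f])).Nodup)
    (hRef : Cft e f) : e ∩ t = e ∩ f := by
  classical
  by_contra hne
  have heE : e ∈ E := hE e (by simp)
  have htE : t ∈ E := hE t (by simp)
  have hfE : f ∈ E := hE f (by simp)
  have hRet : Cft e t := (List.isChain_cons_cons.mp hch).1
  have hq2 : (e ∩ f).card = 2 := conf hℓ hn E h4 hf1 hf2 heE hfE hRef
  have hr2 : (e ∩ t).card = 2 := conf hℓ hn E h4 hf1 hf2 heE htE hRet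
  set q := e ∩ f with hq
  set r := e ∩ t with hr
  have hqr : 3 ≤ (q ∪ r).card := by
    by_contra hc
    push_neg at hc
    have h1 : q ∪ r = q := (Finset.eq_of_subset_of_card_le subset_union_left (by omega)).symm
    have h2 : q ∪ r = r := (Finset.eq_of_subset_of_card_le subset_union_right (by omega)).symm
    exact hne (h2.symm.trans h1)
  -- span bound on the whole cycle
  set tl : List (Finset (Fin n)) := t :: (A ++ [f]) with htl
  have hchtl : List.Chain' (Cft (n := n)) tl := (List.isChain_cons_cons.mp hch).2
  have hEtl : ∀ x ∈ tl, x ∈ E := fun x hx => hE x (List.mem_cons_of_mem _ hx)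
  have hspan : (LU tl).card ≤ 2*(A.length+2) + 2 := by
    have := pathspan hℓ hn E h4 hf1 hf2 tl hchtl hEtl
    simpa [htl] using this
  have hqsub : q ⊆ LU tl := by
    have hm : f ∈ tl := by simp [htl]
    exact (inter_subset_right).trans (subset_LU hm)
  have hrsub : r ⊆ LU tl := by
    have hm : t ∈ tl := by simp [htl]
    exact (inter_subset_right).trans (subset_LU hm)
  set W : Finset (Fin n) := e ∪ LU tl with hW
  have hWcard : W.card ≤ 2*(A.length+3) + 1 := by
    have hsub : W ⊆ (e \ (q ∪ r)) ∪ LU tl := by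
      intro v hv
      rcases mem_union.mp hv with hvx | hvr
      · by_cases hvy : v ∈ LU tl
        · exact mem_union.mpr (Or.inr hvy)
        · refine mem_union.mpr (Or.inl (mem_sdiff.mpr ⟨hvx, ?_⟩))
          intro hvqr
          rcases mem_union.mp hvqr with h | h
          · exact hvy (hqsub h)
          · exact hvy (hrsub h)
      · exact mem_union.mpr (Or.inr hvr)
    have hsd : (e \ (q ∪ r)).card ≤ 1 := by
      have h1 := Finset.card_sdiff_add_card_inter e (q ∪ r)
      have h2 : e ∩ (q ∪ r) = q ∪ r := by
        apply Finset.inter_eq_right.mpr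
        exact Finset.union_subset inter_subset_left inter_subset_left
      rw [h2] at h1
      have := h4 e heE
      omega
    calc W.card ≤ ((e \ (q ∪ r)) ∪ LU tl).card := Finset.card_le_card hsub
      _ ≤ (e \ (q ∪ r)).card + (LU tl).card := Finset.card_union_le _ _
      _ ≤ 2*(A.length+3) + 1 := by omega
  -- the edge set of the cycle
  set F' : Finset (Finset (Fin n)) := (e :: tl).toFinset with hF'
  have hndF : (e :: tl).Nodup := by simpa [htl] using hnd
  have hF'card : F'.card = A.length + 3 := by
    rw [hF', List.toFinset_card_of_nodup hndF]
    simp [htl]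
  have hF'E : F' ⊆ E := by
    intro x hx
    exact hE x (List.mem_toFinset.mp hx)
  have hF'W : ∀ x ∈ F', x ⊆ W := by
    intro x hx
    rw [hF', List.mem_toFinset] at hx
    rcases List.mem_cons.mp hx with rfl | hx
    · exact subset_union_left
    · exact (subset_LU hx).trans subset_union_right
  by_cases hcase : A.length + 3 ≤ ℓ - 2
  · exact viol hℓ hn E h4 hf1 hf2 F' hF'E W hF'W (by omega) (Or.inl ⟨by omega, by omega⟩)
  · -- take a path of ℓ-1 edges from the cycle
    set l' : List (Finset (Fin n)) := (e :: tl).take (ℓ-1) with hl'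
    have hlen : (e :: tl).length = A.length + 3 := by simp [htl]
    have hl'len : l'.length = ℓ - 1 := by
      rw [hl', List.length_take, hlen]; omega
    have hchl' : List.Chain' (Cft (n := n)) l' := by
      have : List.Chain' (Cft (n := n)) (e :: tl) := by
        rw [htl]; exact hch
      exact this.take _
    have hndl' : l'.Nodup := hndF.sublist (List.take_sublist _ _)
    have hEl' : ∀ x ∈ l', x ∈ E := by
      intro x hx
      exact hE x (by simpa [htl] using (List.take_sublist _ _).mem hx)
    set F'' : Finset (Finset (Fin n)) := l'.toFinset with hF''
    have hF''card : F''.card = ℓ - 1 := by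
      rw [hF'', List.toFinset_card_of_nodup hndl', hl'len]
    have hF''E : F'' ⊆ E := by
      intro x hx
      exact hEl' x (List.mem_toFinset.mp hx)
    have hF''W : ∀ x ∈ F'', x ⊆ LU l' := fun x hx => subset_LU (List.mem_toFinset.mp hx)
    have hspan' : (LU l').card ≤ 2*ℓ := by
      have := pathspan hℓ hn E h4 hf1 hf2 l' hchl' hEl'
      rw [hl'len] at this
      omega
    exact viol hℓ hn E h4 hf1 hf2 F'' hF''E (LU l') hF''W (by omega)
      (Or.inr ⟨hF''card, hspan'⟩)

lemma good (F : Finset (Finset (Fin n))) (hFE : F ⊆ E) (hne : F.Nonempty) :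
    ∃ e ∈ F, ∃ p : Finset (Fin n), ∀ f ∈ F, Cft e f → e ∩ f = p := by
  classical
  set Valid : List (Finset (Fin n)) → Prop := fun L =>
    L ≠ [] ∧ L.Chain' (Cft (n := n)) ∧ L.Nodup ∧ ∀ x ∈ L, x ∈ F with hValid
  obtain ⟨e0, he0⟩ := hne
  have h1 : (1 : ℕ) ∈ {k | ∃ L, Valid L ∧ L.length = k} :=
    ⟨[e0], ⟨by simp, List.isChain_singleton _, by simp, by simpa using he0⟩, rfl⟩
  have hbdd : BddAbove {k | ∃ L, Valid L ∧ L.length = k} := by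
    refine ⟨F.card, fun k hk => ?_⟩
    obtain ⟨L, ⟨_, _, hnd, hmem⟩, hlen⟩ := hk
    have hsub : L.toFinset ⊆ F := fun x hx => hmem x (List.mem_toFinset.mp hx)
    have := Finset.card_le_card hsub
    rw [List.toFinset_card_of_nodup hnd, hlen] at this
    exact this
  have hK : sSup {k | ∃ L, Valid L ∧ L.length = k} ∈ {k | ∃ L, Valid L ∧ L.length = k} :=
    Nat.sSup_mem ⟨1, h1⟩ hbdd
  set K := sSup {k | ∃ L, Valid L ∧ L.length = k} with hKdef
  obtain ⟨L, hLvalid, hLlen⟩ := hK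
  have hmax : ∀ L', Valid L' → L'.length ≤ K := fun L' h =>
    le_csSup hbdd ⟨L', h, rfl⟩
  obtain ⟨hLne, hLch, hLnd, hLmem⟩ := hLvalid
  obtain ⟨e, T, rfl⟩ : ∃ e T, L = e :: T := by
    cases L with
    | nil => exact absurd rfl hLne
    | cons a l => exact ⟨a, l, rfl⟩
  have heF : e ∈ F := hLmem e (by simp)
  -- every conflict-neighbour of e lies on the path
  have hnb : ∀ f ∈ F, Cft e f → f ∈ e :: T := by
    intro f hf hR
    by_contra hfL
    have hvalid' : Valid (f :: e :: T) := by
      refine ⟨by simp, ?_, ?_, ?_⟩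
      · exact List.isChain_cons_cons.mpr ⟨rel_symm hR, hLch⟩
      · exact List.nodup_cons.mpr ⟨hfL, hLnd⟩
      · intro x hx
        rcases List.mem_cons.mp hx with rfl | hx
        · exact hf
        · exact hLmem x hx
    have := hmax _ hvalid'
    rw [← hLlen] at this
    simp at this
  cases T with
  | nil =>
    refine ⟨e, heF, ∅, fun f hf hR => ?_⟩
    have := hnb f hf hR
    simp at this
    exact absurd this.symm hR.1
  | cons t T' =>
    refine ⟨e, heF, e ∩ t, fun f hf hR => ?_⟩
    have hfL := hnb f hf hR
    rcases List.mem_cons.mp hfL with rfl | hfL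
    · exact absurd rfl hR.1
    rcases List.mem_cons.mp hfL with rfl | hfL
    · rfl
    · -- f appears later in the path: close a cycle
      obtain ⟨A, B, rfl⟩ := List.append_of_mem hfL
      have hsplit : e :: t :: (A ++ f :: B) = (e :: t :: (A ++ [f])) ++ B := by
        simp
      rw [hsplit] at hLch hLnd hLmem
      have hch' : List.Chain' (Cft (n := n)) (e :: t :: (A ++ [f])) :=
        (List.isChain_append.mp hLch).1
      have hnd' : (e :: t :: (A ++ [f])).Nodup :=
        ((List.prefix_append _ B).sublist).nodup hLnd
      have hE' : ∀ x ∈ (e :: t :: (A ++ [f])), x ∈ E := by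
        intro x hx
        have hx2 : x ∈ e :: t :: (A ++ [f]) ++ B := List.mem_append.mpr (Or.inl hx)
        exact hFE (hLmem x hx2)
      exact (cycle hℓ hn E h4 hf1 hf2 e t f A hE' hch' hnd' hR).symm ▸ rfl

end Core2

section Match
variable {n : ℕ}

lemma matching_avoid {e : Finset (Fin n)} (he : e.card = 4) (p : Finset (Fin n)) :
    ∃ q r : Finset (Fin n), q.card = 2 ∧ r.card = 2 ∧ Disjoint q r ∧ q ∪ r = e ∧
      q ≠ p ∧ r ≠ p := by
  classical
  obtain ⟨a, s, has, hins, hs3⟩ := Finset.card_eq_succ.mp he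
  obtain ⟨b, c, d, hbc, hbd, hcd, rfl⟩ := Finset.card_eq_three.mp hs3
  have hab : a ≠ b := fun h => has (h ▸ by simp)
  have hac : a ≠ c := fun h => has (h ▸ by simp)
  have had : a ≠ d := fun h => has (h ▸ by simp)
  subst hins
  have hu1 : ({a, b} : Finset (Fin n)) ∪ {c, d} = insert a {b, c, d} := by
    ext x; simp; tauto
  have hu2 : ({a, c} : Finset (Fin n)) ∪ {b, d} = insert a {b, c, d} := by
    ext x; simp; tauto
  have hd1 : Disjoint ({a, b} : Finset (Fin n)) {c, d} := by
    simp [Finset.disjoint_left]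
    refine ⟨⟨hac, had⟩, hbc, hbd⟩
  have hd2 : Disjoint ({a, c} : Finset (Fin n)) {b, d} := by
    simp [Finset.disjoint_left]
    refine ⟨⟨hab, had⟩, fun h => absurd h.symm hbc, hcd⟩
  by_cases hp : p = {a, c} ∨ p = {b, d}
  · refine ⟨{a, b}, {c, d}, Finset.card_pair hab, Finset.card_pair hcd, hd1, hu1, ?_, ?_⟩
    · rcases hp with rfl | rfl
      · intro h
        have : c ∈ ({a, b} : Finset (Fin n)) := h ▸ by simp
        simp at this; tauto
      · intro h
        have : d ∈ ({a, b} : Finset (Fin n)) := h ▸ by simp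
        simp at this
        rcases this with h' | h'
        · exact had h'.symm
        · exact hbd h'.symm
    · rcases hp with rfl | rfl
      · intro h
        have : a ∈ ({c, d} : Finset (Fin n)) := h ▸ by simp
        simp at this; tauto
      · intro h
        have : b ∈ ({c, d} : Finset (Fin n)) := h ▸ by simp
        simp at this
        rcases this with h' | h'
        · exact hbc h'
        · exact hbd h'
  · push_neg at hp
    exact ⟨{a, c}, {b, d}, Finset.card_pair hac, Finset.card_pair hbd, hd2, hu2,
      fun h => hp.1 h.symm, fun h => hp.2 h.symm⟩

end Match

section Choice
variable {n ℓ : ℕ}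
variable (hℓ : 3 ≤ ℓ) (hn : 2*ℓ ≤ n) (E : Finset (Finset (Fin n)))
  (h4 : ∀ e ∈ E, e.card = 4)
  (hf1 : IsSKFree (2*ℓ) (ℓ-1) E)
  (hf2 : ∀ i, 2 ≤ i → i ≤ ℓ-2 → IsSKFree (2*i+1) i E)

include hℓ hn h4 hf1 hf2

/-- the property the choice function has on a subfamily `F` -/
def ChoiceOK (F : Finset (Finset (Fin n)))
    (m : Finset (Fin n) → Finset (Fin n) × Finset (Fin n)) : Prop :=
  ∀ e ∈ F, ((m e).1.card = 2 ∧ (m e).2.card = 2 ∧ Disjoint (m e).1 (m e).2 ∧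
      (m e).1 ∪ (m e).2 = e) ∧
    ∀ e' ∈ F, e ≠ e' → (m e).1 ≠ (m e').1 ∧ (m e).1 ≠ (m e').2 ∧
      (m e).2 ≠ (m e').1 ∧ (m e).2 ≠ (m e').2

lemma choiceAux : ∀ (N : ℕ) (F : Finset (Finset (Fin n))), F.card ≤ N → F ⊆ E →
    ∃ m, ChoiceOK F m := by
  intro N
  induction N with
  | zero =>
    intro F hc _
    have : F = ∅ := Finset.card_eq_zero.mp (by omega)
    subst this
    exact ⟨fun _ => (∅, ∅), fun e he => absurd he (by simp)⟩
  | succ N ih =>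
    intro F hc hFE
    classical
    rcases F.eq_empty_or_nonempty with rfl | hne
    · exact ⟨fun _ => (∅, ∅), fun e he => absurd he (by simp)⟩
    obtain ⟨e, heF, p, hp⟩ := good hℓ hn E h4 hf1 hf2 F hFE hne
    have heE : e ∈ E := hFE heF
    obtain ⟨m', hm'⟩ := ih (F.erase e)
      (by have := Finset.card_erase_of_mem heF; omega)
      ((Finset.erase_subset _ _).trans hFE)
    obtain ⟨q, r, hq2, hr2, hdisj, hunion, hqp, hrp⟩ := matching_avoid (h4 e heE) p
    -- any 2-subset of any other edge of F differs from q and r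
    have key : ∀ x ∈ F.erase e, ∀ s : Finset (Fin n), s.card = 2 → s ⊆ x →
        s ≠ q ∧ s ≠ r := by
      intro x hx s hs2 hsx
      have hxF : x ∈ F := Finset.mem_of_mem_erase hx
      have hxe : x ≠ e := Finset.ne_of_mem_erase hx
      have hgen : ∀ w : Finset (Fin n), w.card = 2 → w ⊆ e → s ≠ w ∨ w = p := by
        intro w hw2 hwe
        by_cases hsw : s = w
        · subst hsw
          have hRe : Cft e x := by
            refine ⟨hxe.symm, ?_⟩
            have : s ⊆ e ∩ x := fun v hv => mem_inter.mpr ⟨hwe hv, hsx hv⟩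
            calc 2 = s.card := hs2.symm
              _ ≤ (e ∩ x).card := Finset.card_le_card this
          have hex : e ∩ x = p := hp x hxF hRe
          have hcard : (e ∩ x).card = 2 := conf hℓ hn E h4 hf1 hf2 heE (hFE hxF) hRe
          have hsub : s ⊆ e ∩ x := fun v hv => mem_inter.mpr ⟨hwe hv, hsx hv⟩
          have : s = e ∩ x := Finset.eq_of_subset_of_card_le hsub (by omega)
          exact Or.inr (this ▸ hex ▸ (this.symm.trans (hex ▸ this)) ▸ hex)
        · exact Or.inl hsw
      constructor
      · rcases hgen q hq2 (hunion ▸ subset_union_left) with h | h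
        · exact h
        · exact fun hh => hqp (h ▸ hh ▸ rfl)
      · rcases hgen r hr2 (hunion ▸ subset_union_right) with h | h
        · exact h
        · exact fun hh => hrp (h ▸ hh ▸ rfl)
    refine ⟨fun x => if x = e then (q, r) else m' x, ?_⟩
    intro x hxF
    by_cases hxe : x = e
    · refine ⟨by simp only [if_pos hxe]; exact ⟨hq2, hr2, hdisj, hunion.trans hxe.symm⟩, ?_⟩
      intro x' hx' hne'
      have hx'e : x' ≠ e := fun h => hne' (hxe.trans h.symm)
      have hx'erase : x' ∈ F.erase e := Finset.mem_erase.mpr ⟨hx'e, hx'⟩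
      have h1 := (hm' x' hx'erase).1
      have k1 := key x' hx'erase (m' x').1 h1.1
        (fun v hv => h1.2.2.2 ▸ Finset.mem_union.mpr (Or.inl hv))
      have k2 := key x' hx'erase (m' x').2 h1.2.1
        (fun v hv => h1.2.2.2 ▸ Finset.mem_union.mpr (Or.inr hv))
      simp only [if_pos hxe, if_neg hx'e]
      exact ⟨fun h => k1.1 h.symm, fun h => k2.1 h.symm,
        fun h => k1.2 h.symm, fun h => k2.2 h.symm⟩
    · have hxerase : x ∈ F.erase e := Finset.mem_erase.mpr ⟨hxe, hxF⟩
      have h1 := hm' x hxerase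
      refine ⟨by simp only [if_neg hxe]; exact h1.1, ?_⟩
      intro x' hx' hne'
      by_cases hx'e : x' = e
      · have k1 := key x hxerase (m' x).1 h1.1.1
          (fun v hv => h1.1.2.2.2 ▸ Finset.mem_union.mpr (Or.inl hv))
        have k2 := key x hxerase (m' x).2 h1.1.2.1
          (fun v hv => h1.1.2.2.2 ▸ Finset.mem_union.mpr (Or.inr hv))
        simp only [if_neg hxe, if_pos hx'e]
        exact ⟨k1.1, k1.2, k2.1, k2.2⟩
      · have hx'erase : x' ∈ F.erase e := Finset.mem_erase.mpr ⟨hx'e, hx'⟩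
        simp only [if_neg hxe, if_neg hx'e]
        exact h1.2 x' hx'erase hne'

lemma choice : ∃ m, ChoiceOK E m :=
  choiceAux hℓ hn E h4 hf1 hf2 E.card E le_rfl le_rfl

end Choice

/-- For every `ℓ ≥ 3` and `n ≥ 2ℓ`, there is an edge-coloring of `K_n` using exactly
`C(n,2) - H⁽⁴⁾(n; 2ℓ, ℓ-1)` colors in which every set of `2ℓ` vertices spans at least
`C(2ℓ,2) - ℓ + 2` distinct colors, every color is used on at most two edges, and no two
edges sharing a vertex receive the same color.  In particular,
`f(n, 2ℓ, C(2ℓ,2) - ℓ + 2) ≤ C(n,2) - H⁽⁴⁾(n; 2ℓ, ℓ-1)`. -/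
theorem stmt_13 (ℓ : ℕ) (hℓ : 3 ≤ ℓ) (n : ℕ) (hn : 2 * ℓ ≤ n) :
    (∃ χ : Finset (Fin n) → ℕ,
      (colorsIn χ (univ : Finset (Fin n))).card = n.choose 2 - Hval n ℓ ∧
      (∀ S : Finset (Fin n), S.card = 2 * ℓ →
        (2 * ℓ).choose 2 - ℓ + 2 ≤ (colorsIn χ S).card) ∧
      (∀ c : ℕ,
        (((univ : Finset (Fin n)).powersetCard 2).filter (fun e => χ e = c)).card ≤ 2) ∧
      (∀ e f : Finset (Fin n), e.card = 2 → f.card = 2 → e ≠ f →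
        (e ∩ f).Nonempty → χ e ≠ χ f)) ∧
    genRamsey n (2 * ℓ) ((2 * ℓ).choose 2 - ℓ + 2) ≤ n.choose 2 - Hval n ℓ := by
  classical
  -- extremal hypergraph attaining Hval
  have hmem : Hval n ℓ ∈ {m : ℕ | ∃ E : Finset (Finset (Fin n)),
      (∀ e ∈ E, e.card = 4) ∧
      IsSKFree (2 * ℓ) (ℓ - 1) E ∧
      (∀ i, 2 ≤ i → i ≤ ℓ - 2 → IsSKFree (2 * i + 1) i E) ∧
      (∀ v : Fin n, (E.filter (fun e => v ∈ e)).card = 0 ∨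
        ℓ - 1 ≤ (E.filter (fun e => v ∈ e)).card) ∧
      E.card = m} := by
    apply Nat.sSup_mem
    · refine ⟨0, ∅, by simp, ?_, ?_, by simp, by simp⟩
      · intro S hS; simp only [Finset.filter_empty, Finset.card_empty]; omega
      · intro i hi _ S hS; simp only [Finset.filter_empty, Finset.card_empty]; omega
    · refine ⟨Fintype.card (Finset (Fin n)), ?_⟩
      rintro m ⟨E, _, _, _, _, rfl⟩
      exact Finset.card_le_univ E
  obtain ⟨E, h4, hfree1, hfree2, hdeg, hEcard⟩ := hmem
  have hℓn : 2*ℓ ≤ n := by omega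
  obtain ⟨m, hm⟩ := choice hℓ hℓn E h4 hfree1 hfree2
  set p1 : Finset (Fin n) → Finset (Fin n) := fun e => (m e).1 with hp1def
  set p2 : Finset (Fin n) → Finset (Fin n) := fun e => (m e).2 with hp2def
  have hp1card : ∀ e ∈ E, (p1 e).card = 2 := fun e he => (hm e he).1.1
  have hp2card : ∀ e ∈ E, (p2 e).card = 2 := fun e he => (hm e he).1.2.1
  have hdisj : ∀ e ∈ E, Disjoint (p1 e) (p2 e) := fun e he => (hm e he).1.2.2.1
  have huni : ∀ e ∈ E, p1 e ∪ p2 e = e := fun e he => (hm e he).1.2.2.2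
  have hcross : ∀ e ∈ E, ∀ f ∈ E, e ≠ f → p1 e ≠ p1 f ∧ p1 e ≠ p2 f ∧
      p2 e ≠ p1 f ∧ p2 e ≠ p2 f := fun e he f hf hef => (hm e he).2 f hf hef
  have hp12 : ∀ e ∈ E, p1 e ≠ p2 e := by
    intro e he h
    have hd := hdisj e he
    rw [h] at hd
    have : p2 e = ∅ := disjoint_self.mp hd
    rw [this] at h
    have := hp1card e he
    rw [h] at this
    simp at this
  set ι : Finset (Fin n) → ℕ := fun s => ((Fintype.equivFin (Finset (Fin n))) s : ℕ)
    with hιdef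
  have hι : Function.Injective ι := fun a b h =>
    (Fintype.equivFin (Finset (Fin n))).injective (Fin.val_injective h)
  set rep : Finset (Fin n) → Finset (Fin n) :=
    fun s => if h : ∃ e, e ∈ E ∧ p2 e = s then p1 h.choose else s with hrepdef
  have hrep_notin : ∀ s : Finset (Fin n), (¬ ∃ e, e ∈ E ∧ p2 e = s) → rep s = s := by
    intro s h; simp only [hrepdef, dif_neg h]
  have hrep2 : ∀ e ∈ E, rep (p2 e) = p1 e := by
    intro e he
    have hex : ∃ e', e' ∈ E ∧ p2 e' = p2 e := ⟨e, he, rfl⟩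
    simp only [hrepdef, dif_pos hex]
    obtain ⟨hE', hp2'⟩ := hex.choose_spec
    by_cases h : hex.choose = e
    · rw [h]
    · exact absurd hp2' (hcross _ hE' e he h).2.2.2
  have hrepc : ∀ s : Finset (Fin n),
      (∃ e, e ∈ E ∧ p2 e = s ∧ rep s = p1 e) ∨ ((∀ e ∈ E, p2 e ≠ s) ∧ rep s = s) := by
    intro s
    by_cases h : ∃ e, e ∈ E ∧ p2 e = s
    · obtain ⟨e, he, hp⟩ := h
      exact Or.inl ⟨e, he, hp, by rw [← hp]; exact hrep2 e he⟩
    · push_neg at h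
      exact Or.inr ⟨h, hrep_notin s (by push_neg; exact h)⟩
  set χ : Finset (Fin n) → ℕ := fun s => ι (rep s) with hχdef
  set P : Finset (Finset (Fin n)) := (univ : Finset (Fin n)).powersetCard 2 with hPdef
  set Q : Finset (Finset (Fin n)) := E.image p2 with hQdef
  have hQP : Q ⊆ P := by
    intro s hs
    obtain ⟨e, he, rfl⟩ := Finset.mem_image.mp hs
    exact Finset.mem_powersetCard.mpr ⟨Finset.subset_univ _, hp2card e he⟩
  have hQcard : Q.card = E.card := by
    apply Finset.card_image_of_injOn
    intro e he f hf h
    by_contra hef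
    exact (hcross e (by simpa using he) f (by simpa using hf) hef).2.2.2 h
  have hPcard : P.card = n.choose 2 := by
    rw [hPdef, Finset.card_powersetCard]; simp
  have himg : P.image rep = P \ Q := by
    apply Finset.ext
    intro s
    simp only [Finset.mem_image, Finset.mem_sdiff]
    constructor
    · rintro ⟨t, htP, rfl⟩
      rcases hrepc t with ⟨e, he, hp2t, hrt⟩ | ⟨hna, hrt⟩
      · rw [hrt]
        refine ⟨Finset.mem_powersetCard.mpr ⟨Finset.subset_univ _, hp1card e he⟩, ?_⟩
        intro hQ
        obtain ⟨f, hf, hpf⟩ := Finset.mem_image.mp hQ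
        by_cases h : f = e
        · exact hp12 e he (h ▸ hpf).symm
        · exact (hcross f hf e he h).2.2.1 hpf
      · rw [hrt]
        refine ⟨htP, fun hQ => ?_⟩
        obtain ⟨f, hf, hpf⟩ := Finset.mem_image.mp hQ
        exact hna f hf hpf
    · rintro ⟨hsP, hsQ⟩
      refine ⟨s, hsP, hrep_notin s ?_⟩
      rintro ⟨e, he, hpe⟩
      exact hsQ (Finset.mem_image.mpr ⟨e, he, hpe⟩)
  have colorsVal : (colorsIn χ (univ : Finset (Fin n))).card = n.choose 2 - E.card := by
    show ((((univ : Finset (Fin n)).powersetCard 2)).image χ).card = _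
    have h1 : (P.image rep).image ι = P.image χ := by
      rw [Finset.image_image]
      rfl
    rw [← hPdef, ← h1, Finset.card_image_of_injective _ hι, himg,
      Finset.card_sdiff_of_subset hQP, hPcard, hQcard]
  -- lower bound on colors within any 2ℓ-set
  have hchoose : (2*ℓ).choose 2 = ℓ * (2*ℓ - 1) := by
    rw [Nat.choose_two_right]
    have h2 : 2*ℓ*(2*ℓ-1) = 2*(ℓ*(2*ℓ-1)) := by ring
    rw [h2, Nat.mul_div_cancel_left _ (by norm_num : 0 < 2)]
  have colorsLB : ∀ S : Finset (Fin n), S.card = 2*ℓ →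
      (2*ℓ).choose 2 - ℓ + 2 ≤ (colorsIn χ S).card := by
    intro S hS
    set PS : Finset (Finset (Fin n)) := S.powersetCard 2 with hPSdef
    set B : Finset (Finset (Fin n)) := E.filter (fun e => e ⊆ S) with hBdef
    set BQ : Finset (Finset (Fin n)) := B.image p2 with hBQdef
    have hBcard : B.card ≤ ℓ - 2 := by
      have h := hfree1 S hS
      rw [← hBdef] at h
      omega
    have haux : ∀ s ∈ PS \ BQ, (rep s = s) ∨
        (∃ e, e ∈ E ∧ p2 e = s ∧ ¬ (p1 e ⊆ S) ∧ rep s = p1 e) := by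
      intro s hs
      rcases hrepc s with ⟨e, he, hp2s, hrt⟩ | ⟨_, hrt⟩
      · right
        refine ⟨e, he, hp2s, ?_, hrt⟩
        intro hsubS
        have hsS : s ⊆ S := (Finset.mem_powersetCard.mp (Finset.mem_sdiff.mp hs).1).1
        have heB : e ∈ B := by
          refine Finset.mem_filter.mpr ⟨he, ?_⟩
          rw [← huni e he]
          exact Finset.union_subset hsubS (hp2s ▸ hsS)
        exact (Finset.mem_sdiff.mp hs).2 (Finset.mem_image.mpr ⟨e, heB, hp2s⟩)
      · left; exact hrt
    have hinj : Set.InjOn rep ↑(PS \ BQ) := by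
      intro s hs t ht heq
      rcases haux s hs with hrs | ⟨e, he, hp2s, hns, hrs⟩ <;>
        rcases haux t ht with hrt | ⟨f, hf, hp2t, hnt, hrt⟩
      · rw [hrs, hrt] at heq; exact heq
      · exfalso
        rw [hrs, hrt] at heq
        have hsS : s ⊆ S := (Finset.mem_powersetCard.mp (Finset.mem_sdiff.mp hs).1).1
        exact hnt (heq ▸ hsS)
      · exfalso
        rw [hrs, hrt] at heq
        have htS : t ⊆ S := (Finset.mem_powersetCard.mp (Finset.mem_sdiff.mp ht).1).1
        exact hns (heq ▸ htS)
      · rw [hrs, hrt] at heq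
        have hef : e = f := by
          by_contra h
          exact (hcross e he f hf h).1 heq
        rw [← hp2s, ← hp2t, hef]
    have h1 : (PS.image rep).image ι = PS.image χ := by
      rw [Finset.image_image]; rfl
    have hcolcard : (colorsIn χ S).card = (PS.image rep).card := by
      show ((S.powersetCard 2).image χ).card = _
      rw [← hPSdef, ← h1, Finset.card_image_of_injective _ hι]
    have hstep : (PS \ BQ).card ≤ (PS.image rep).card := by
      calc (PS \ BQ).card = ((PS \ BQ).image rep).card :=
            (Finset.card_image_of_injOn hinj).symm
        _ ≤ (PS.image rep).card :=
            Finset.card_le_card (Finset.image_subset_image Finset.sdiff_subset)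
    have hPScard : PS.card = (2*ℓ).choose 2 := by
      rw [hPSdef, Finset.card_powersetCard, hS]
    have hBQcard : BQ.card ≤ ℓ - 2 := le_trans (Finset.card_image_le) hBcard
    have hsd : PS.card - BQ.card ≤ (PS \ BQ).card := Finset.le_card_sdiff _ _
    have hge : ℓ ≤ (2*ℓ).choose 2 := by
      rw [hchoose]
      calc ℓ = ℓ * 1 := (mul_one ℓ).symm
        _ ≤ ℓ * (2*ℓ - 1) := Nat.mul_le_mul_left ℓ (by omega)
    omega
  refine ⟨⟨χ, by rw [colorsVal, hEcard], colorsLB, ?_, ?_⟩, ?_⟩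
  · -- every color on at most two edges
    intro c
    suffices h : ∃ x y : Finset (Fin n), P.filter (fun s => χ s = c) ⊆ {x, y} by
      obtain ⟨x, y, hxy⟩ := h
      calc (P.filter (fun s => χ s = c)).card ≤ ({x, y} : Finset (Finset (Fin n))).card :=
            Finset.card_le_card hxy
        _ ≤ 2 := Finset.card_le_two
    by_cases hc1 : ∃ e, e ∈ E ∧ ι (p1 e) = c
    · obtain ⟨e, he, hce⟩ := hc1
      refine ⟨p1 e, p2 e, ?_⟩
      intro s hs
      have hχs : χ s = c := (Finset.mem_filter.mp hs).2
      have hreps : rep s = p1 e := hι (hχs.trans hce.symm)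
      rcases hrepc s with ⟨f, hf, hp2s, hrs⟩ | ⟨_, hrs⟩
      · have hef : f = e := by
          by_contra h
          exact (hcross f hf e he h).1 (hrs ▸ hreps)
        rw [← hp2s, hef]
        simp
      · rw [← hrs, hreps]
        simp
    · rcases (P.filter (fun s => χ s = c)).eq_empty_or_nonempty with hT | ⟨s0, hs0⟩
      · exact ⟨∅, ∅, by rw [hT]; exact Finset.empty_subset _⟩
      · refine ⟨s0, s0, ?_⟩
        have hχ0 : χ s0 = c := (Finset.mem_filter.mp hs0).2
        have hrs0 : rep s0 = s0 := by
          rcases hrepc s0 with ⟨f, hf, _, hrs⟩ | ⟨_, hrs⟩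
          · exact absurd ⟨f, hf, hrs ▸ hχ0⟩ hc1
          · exact hrs
        intro t ht
        have hχt : χ t = c := (Finset.mem_filter.mp ht).2
        have hrt : rep t = t := by
          rcases hrepc t with ⟨f, hf, _, hrs⟩ | ⟨_, hrs⟩
          · exact absurd ⟨f, hf, hrs ▸ hχt⟩ hc1
          · exact hrs
        have : t = s0 := by
          have h := hι (hχt.trans hχ0.symm)
          rwa [hrt, hrs0] at h
        simp [this]
  · -- proper
    intro a b ha2 hb2 hab hint heq
    have hrab : rep a = rep b := hι heq
    rcases hrepc a with ⟨e, he, hp2a, hra⟩ | ⟨_, hra⟩ <;>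
      rcases hrepc b with ⟨f, hf, hp2b, hrb⟩ | ⟨_, hrb⟩
    · have hef : e = f := by
        by_contra h
        exact (hcross e he f hf h).1 (hra ▸ hrb ▸ hrab)
      exact hab (hp2a.symm.trans (hef ▸ hp2b))
    · rw [hra, hrb] at hrab
      obtain ⟨v, hv⟩ := hint
      have hv1 : v ∈ p2 e := hp2a ▸ (Finset.mem_inter.mp hv).1
      have hv2 : v ∈ p1 e := hrab ▸ (Finset.mem_inter.mp hv).2
      exact (Finset.disjoint_right.mp (hdisj e he)) hv1 hv2
    · rw [hra, hrb] at hrab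
      obtain ⟨v, hv⟩ := hint
      have hv1 : v ∈ p1 f := hrab ▸ (Finset.mem_inter.mp hv).1
      have hv2 : v ∈ p2 f := hp2b ▸ (Finset.mem_inter.mp hv).2
      exact (Finset.disjoint_right.mp (hdisj f hf)) hv2 hv1
    · rw [hra, hrb] at hrab
      exact hab hrab
  · -- genRamsey bound
    set C : ℕ := n.choose 2 - Hval n ℓ with hCdef
    have hCeq : (colorsIn χ (univ : Finset (Fin n))).card = C := by
      rw [colorsVal, hEcard]
    have hCpos : 0 < C := by
      rw [← hCeq]
      apply Finset.Nonempty.card_pos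
      apply Finset.Nonempty.image
      rw [Finset.powersetCard_nonempty]
      simp
      omega
    set g : ℕ → Fin C := fun x =>
      if h : x ∈ colorsIn χ (univ : Finset (Fin n)) then
        Finset.equivFinOfCardEq hCeq ⟨x, h⟩ else ⟨0, hCpos⟩ with hgdef
    have hmemset : C ∈ {C' : ℕ | ∃ χ' : Finset (Fin n) → Fin C',
        ∀ S : Finset (Fin n), S.card = 2*ℓ →
          (2*ℓ).choose 2 - ℓ + 2 ≤ (colorsIn (fun s => χ' s) S).card} := by
      refine ⟨fun s => g (χ s), ?_⟩
      intro S hS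
      have himg2 : colorsIn (fun s => g (χ s)) S = (colorsIn χ S).image g := by
        show (S.powersetCard 2).image (fun s => g (χ s)) = _
        rw [show colorsIn χ S = (S.powersetCard 2).image χ from rfl, Finset.image_image]
        rfl
      have hsubcolors : colorsIn χ S ⊆ colorsIn χ (univ : Finset (Fin n)) :=
        Finset.image_subset_image (Finset.powersetCard_mono (Finset.subset_univ S))
      have hginj : Set.InjOn g ↑(colorsIn χ S) := by
        intro a ha b hb hgab
        have haU : a ∈ colorsIn χ (univ : Finset (Fin n)) := hsubcolors ha
        have hbU : b ∈ colorsIn χ (univ : Finset (Fin n)) := hsubcolors hb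
        rw [hgdef] at hgab
        simp only [dif_pos haU, dif_pos hbU] at hgab
        have h2 := (Finset.equivFinOfCardEq hCeq).injective hgab
        exact congrArg Subtype.val h2
      rw [himg2, Finset.card_image_of_injOn hginj]
      exact colorsLB S hS
    exact Nat.sInf_le hmemset
end

section
/- Let n ≥ 6 and let χ be an edge-coloring of K_n such that every set of 6 vertices spans at least 14 distinct colors. Then there is at most one unordered pair {e, f} of distinct edges that share a vertex and satisfy χ(e) = χ(f); that is, χ contains at most one monochromatic path on three vertices. -/
open Finset

lemma image_erase_eq {β α : Type*} [DecidableEq β] [DecidableEq α] {s : Finset β}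
    {f : β → α} {a b : β} (hb : b ∈ s) (hab : a ≠ b) (hf : f a = f b) :
    s.image f = (s.erase a).image f := by
  apply Finset.Subset.antisymm
  · intro x hx
    simp only [mem_image] at hx ⊢
    obtain ⟨y, hy, rfl⟩ := hx
    by_cases hya : y = a
    · exact ⟨b, mem_erase.2 ⟨hab.symm, hb⟩, by rw [← hf, hya]⟩
    · exact ⟨y, mem_erase.2 ⟨hya, hy⟩, rfl⟩
  · exact image_subset_image (erase_subset _ _)

lemma two_pairs_bound {β α : Type*} [DecidableEq β] [DecidableEq α] {s : Finset β}
    {f : β → α} {a b c d : β} (ha : a ∈ s) (hb : b ∈ s) (hc : c ∈ s) (hd : d ∈ s)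
    (hab : a ≠ b) (hcd : c ≠ d) (hac : a ≠ c) (had : a ≠ d)
    (hfab : f a = f b) (hfcd : f c = f d) :
    (s.image f).card ≤ s.card - 2 := by
  rw [image_erase_eq hb hab hfab,
    image_erase_eq (mem_erase.2 ⟨had.symm, hd⟩) hcd hfcd]
  calc (((s.erase a).erase c).image f).card ≤ ((s.erase a).erase c).card :=
        card_image_le
    _ = s.card - 2 := by
        rw [card_erase_of_mem (mem_erase.2 ⟨hac.symm, hc⟩), card_erase_of_mem ha]
        omega

/-- If `n ≥ 6` and `χ` is an edge-coloring of `K_n` in which every set of `6` vertices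
spans at least `14` colors, then there is at most one unordered pair `{e, f}` of distinct
edges sharing a vertex with `χ e = χ f`: any two such pairs coincide. -/
theorem stmt_18 {n : ℕ} (hn : 6 ≤ n) {α : Type*} [DecidableEq α]
    (χ : Finset (Fin n) → α)
    (h : ∀ S : Finset (Fin n), S.card = 6 → 14 ≤ (colorsIn χ S).card) :
    ∀ e₁ f₁ e₂ f₂ : Finset (Fin n),
      e₁.card = 2 → f₁.card = 2 → e₂.card = 2 → f₂.card = 2 →
      e₁ ≠ f₁ → e₂ ≠ f₂ →
      (e₁ ∩ f₁).Nonempty → (e₂ ∩ f₂).Nonempty →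
      χ e₁ = χ f₁ → χ e₂ = χ f₂ →
      ({e₁, f₁} : Finset (Finset (Fin n))) = {e₂, f₂} := by
  intro e₁ f₁ e₂ f₂ he₁ hf₁ he₂ hf₂ hne₁ hne₂ hi₁ hi₂ hc₁ hc₂
  by_contra hne
  -- pick a ∈ {e₁,f₁} \ {e₂,f₂}, b its partner
  have h1 : (e₁ ≠ e₂ ∧ e₁ ≠ f₂) ∨ (f₁ ≠ e₂ ∧ f₁ ≠ f₂) := by
    by_contra hcon
    push_neg at hcon
    obtain ⟨h1, h2⟩ := hcon
    rcases eq_or_ne e₁ e₂ with heq | hx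
    · have hf : f₁ = f₂ := h2 (by rw [← heq]; exact hne₁.symm)
      exact hne (by rw [heq, hf])
    · have he : e₁ = f₂ := h1 hx
      have hf : f₁ = e₂ := by
        rcases eq_or_ne f₁ e₂ with h' | h'
        · exact h'
        · exact absurd (h2 h' ▸ he) hne₁
      exact hne (by rw [he, hf, pair_comm])
  have key : ∃ a b : Finset (Fin n), ({a, b} : Finset (Finset (Fin n))) = {e₁, f₁} ∧
      a ≠ b ∧ a ≠ e₂ ∧ a ≠ f₂ ∧ χ a = χ b := by
    rcases h1 with ⟨h1, h2⟩ | ⟨h1, h2⟩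
    · exact ⟨e₁, f₁, rfl, hne₁, h1, h2, hc₁⟩
    · exact ⟨f₁, e₁, pair_comm _ _, hne₁.symm, h1, h2, hc₁.symm⟩
  obtain ⟨a, b, hab_eq, hab, hae₂, haf₂, hfab⟩ := key
  have hmem : ∀ x ∈ ({a, b} : Finset (Finset (Fin n))), x = e₁ ∨ x = f₁ := by
    intro x hx; rw [hab_eq] at hx; simpa using hx
  have ha2 : a.card = 2 := by
    rcases hmem a (by simp) with rfl | rfl <;> assumption
  have hb2 : b.card = 2 := by
    rcases hmem b (by simp) with rfl | rfl <;> assumption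
  have habu : a ∪ b = e₁ ∪ f₁ := by
    have : ({a, b} : Finset (Finset (Fin n))).sup id = ({e₁, f₁} : Finset (Finset (Fin n))).sup id := by rw [hab_eq]
    simpa using this
  -- build a 6-set
  have hu1 : (e₁ ∪ f₁).card ≤ 3 := by
    have := card_union_add_card_inter e₁ f₁
    have h1 : 1 ≤ (e₁ ∩ f₁).card := card_pos.2 hi₁
    omega
  have hu2 : (e₂ ∪ f₂).card ≤ 3 := by
    have := card_union_add_card_inter e₂ f₂
    have h1 : 1 ≤ (e₂ ∩ f₂).card := card_pos.2 hi₂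
    omega
  have hU : ((e₁ ∪ f₁) ∪ (e₂ ∪ f₂)).card ≤ 6 := by
    have := card_union_le (e₁ ∪ f₁) (e₂ ∪ f₂); omega
  obtain ⟨S, hSsub, -, hScard⟩ := exists_subsuperset_card_eq
    (subset_univ ((e₁ ∪ f₁) ∪ (e₂ ∪ f₂))) hU (by simpa using hn)
  have h14 := h S hScard
  have hmemS : ∀ x : Finset (Fin n), x.card = 2 → x ⊆ (e₁ ∪ f₁) ∪ (e₂ ∪ f₂) →
      x ∈ S.powersetCard 2 := by
    intro x hx hsub
    exact mem_powersetCard.2 ⟨hsub.trans hSsub, hx⟩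
  have haS : a ∈ S.powersetCard 2 := hmemS a ha2 <| by
    intro x hx; exact mem_union_left _ (habu ▸ mem_union_left _ hx)
  have hbS : b ∈ S.powersetCard 2 := hmemS b hb2 <| by
    intro x hx; exact mem_union_left _ (habu ▸ mem_union_right _ hx)
  have he₂S : e₂ ∈ S.powersetCard 2 := hmemS e₂ he₂ <| by
    intro x hx; exact mem_union_right _ (mem_union_left _ hx)
  have hf₂S : f₂ ∈ S.powersetCard 2 := hmemS f₂ hf₂ <| by
    intro x hx; exact mem_union_right _ (mem_union_right _ hx)
  have hbound := two_pairs_bound haS hbS he₂S hf₂S hab hne₂ hae₂ haf₂ hfab hc₂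
  rw [card_powersetCard, hScard] at hbound
  have h15 : Nat.choose 6 2 = 15 := by decide
  rw [h15] at hbound
  unfold colorsIn at h14
  norm_num at hbound
  omega
end

section
/- Let n ≥ 6 and let χ be an edge-coloring of K_n such that every set of 6 vertices spans at least 14 distinct colors and no two edges sharing a vertex receive the same color. Then the number of colors used on exactly two edges is at most binom(n,2)/6. -/
open Finset

/-- If `n ≥ 6` and `χ` is an edge-coloring of `K_n` in which every set of `6` vertices
spans at least `14` colors and no two edges sharing a vertex get the same color, then the
number of colors used on exactly two edges is at most `C(n,2)/6`. -/
theorem stmt_19 {n : ℕ} (hn : 6 ≤ n) {α : Type*} [DecidableEq α]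
    (χ : Finset (Fin n) → α)
    (h : ∀ S : Finset (Fin n), S.card = 6 → 14 ≤ (colorsIn χ S).card)
    (hproper : ∀ e f : Finset (Fin n), e.card = 2 → f.card = 2 → e ≠ f →
      (e ∩ f).Nonempty → χ e ≠ χ f) :
    (((colorsIn χ (univ : Finset (Fin n))).filter
        (fun c =>
          (((univ : Finset (Fin n)).powersetCard 2).filter (fun e => χ e = c)).card = 2)).card
        : ℝ) ≤ (n.choose 2 : ℝ) / 6 := by
  classical
  set T := ((colorsIn χ (univ : Finset (Fin n))).filter
      (fun c =>
        (((univ : Finset (Fin n)).powersetCard 2).filter (fun e => χ e = c)).card = 2))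
    with hT
  have key : ∀ c ∈ T, ∃ e f : Finset (Fin n), e ≠ f ∧ e.card = 2 ∧ f.card = 2 ∧
      χ e = c ∧ χ f = c ∧ Disjoint e f ∧
      (((univ : Finset (Fin n)).powersetCard 2).filter (fun e => χ e = c)) = {e, f} := by
    intro c hc
    rw [hT, mem_filter] at hc
    obtain ⟨e, f, hef, heq⟩ := Finset.card_eq_two.mp hc.2
    have he : e ∈ ((univ : Finset (Fin n)).powersetCard 2).filter (fun e => χ e = c) := by
      rw [heq]; simp
    have hf : f ∈ ((univ : Finset (Fin n)).powersetCard 2).filter (fun e => χ e = c) := by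
      rw [heq]; simp
    rw [mem_filter, Finset.mem_powersetCard] at he hf
    refine ⟨e, f, hef, he.1.2, hf.1.2, he.2, hf.2, ?_, heq⟩
    by_contra hd
    rw [Finset.disjoint_iff_inter_eq_empty] at hd
    exact hproper e f he.1.2 hf.1.2 hef (Finset.nonempty_iff_ne_empty.mpr hd)
      (he.2.trans hf.2.symm)
  set φ : α → Finset (Fin n) := fun c =>
    (((univ : Finset (Fin n)).powersetCard 2).filter (fun e => χ e = c)).sup id with hφdef
  have hφ : ∀ (c : α) (e f : Finset (Fin n)),
      (((univ : Finset (Fin n)).powersetCard 2).filter (fun e' => χ e' = c)) = {e, f} →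
      φ c = e ∪ f := by
    intro c e f heq
    rw [hφdef]; simp only [heq, Finset.sup_insert, Finset.sup_singleton, id]
    rfl
  have hφcard : ∀ c ∈ T, (φ c).card = 4 := by
    intro c hc
    obtain ⟨e, f, hef, he2, hf2, _, _, hd, heq⟩ := key c hc
    rw [hφ c e f heq, Finset.card_union_of_disjoint hd, he2, hf2]
  have main : ∀ c ∈ T, ∀ c' ∈ T, c ≠ c' → (φ c ∩ φ c').card ≤ 1 := by
    intro c hc c' hc' hne
    by_contra hcard
    push_neg at hcard
    obtain ⟨e1, f1, hef1, he1, hf1, hχe1, hχf1, hd1, heq1⟩ := key c hc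
    obtain ⟨e2, f2, hef2, he2, hf2, hχe2, hχf2, hd2, heq2⟩ := key c' hc'
    have hu : (φ c ∪ φ c').card ≤ 6 := by
      have := Finset.card_union_add_card_inter (φ c) (φ c')
      have h4 := hφcard c hc
      have h4' := hφcard c' hc'
      omega
    obtain ⟨S, hSsub, _, hScard⟩ := Finset.exists_subsuperset_card_eq
      (Finset.subset_univ (φ c ∪ φ c')) hu (by simpa using hn)
    have hφc : φ c = e1 ∪ f1 := hφ c e1 f1 heq1
    have hφc' : φ c' = e2 ∪ f2 := hφ c' e2 f2 heq2
    have hcS : φ c ⊆ S := Finset.subset_union_left.trans hSsub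
    have hc'S : φ c' ⊆ S := Finset.subset_union_right.trans hSsub
    have he1S : e1 ∈ S.powersetCard 2 := Finset.mem_powersetCard.mpr
      ⟨(hφc ▸ Finset.subset_union_left : e1 ⊆ φ c).trans hcS, he1⟩
    have hf1S : f1 ∈ S.powersetCard 2 := Finset.mem_powersetCard.mpr
      ⟨(hφc ▸ Finset.subset_union_right : f1 ⊆ φ c).trans hcS, hf1⟩
    have he2S : e2 ∈ S.powersetCard 2 := Finset.mem_powersetCard.mpr
      ⟨(hφc' ▸ Finset.subset_union_left : e2 ⊆ φ c').trans hc'S, he2⟩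
    have hf2S : f2 ∈ S.powersetCard 2 := Finset.mem_powersetCard.mpr
      ⟨(hφc' ▸ Finset.subset_union_right : f2 ⊆ φ c').trans hc'S, hf2⟩
    have hf1f2 : f1 ≠ f2 := fun hEq => hne (hχf1.symm.trans (hEq ▸ hχf2))
    have he1f2 : e1 ≠ f2 := fun hEq => hne (hχe1.symm.trans (hEq ▸ hχf2))
    have he2f1 : e2 ≠ f1 := fun hEq => hne.symm (hχe2.symm.trans (hEq ▸ hχf1))
    have himg : colorsIn χ S ⊆ (((S.powersetCard 2).erase f1).erase f2).image χ := by
      intro x hx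
      obtain ⟨a, ha, rfl⟩ := Finset.mem_image.mp hx
      by_cases h1 : a = f1
      · refine Finset.mem_image.mpr ⟨e1, ?_, by rw [hχe1, h1, hχf1]⟩
        exact Finset.mem_erase.mpr ⟨he1f2, Finset.mem_erase.mpr ⟨hef1, he1S⟩⟩
      by_cases h2 : a = f2
      · refine Finset.mem_image.mpr ⟨e2, ?_, by rw [hχe2, h2, hχf2]⟩
        exact Finset.mem_erase.mpr ⟨hef2, Finset.mem_erase.mpr ⟨he2f1, he2S⟩⟩
      · exact Finset.mem_image.mpr ⟨a, Finset.mem_erase.mpr ⟨h2,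
          Finset.mem_erase.mpr ⟨h1, ha⟩⟩, rfl⟩
    have hc13 : ((((S.powersetCard 2).erase f1).erase f2).image χ).card ≤ 13 := by
      refine Finset.card_image_le.trans ?_
      rw [Finset.card_erase_of_mem (Finset.mem_erase.mpr ⟨hf1f2.symm, hf2S⟩),
        Finset.card_erase_of_mem hf1S, Finset.card_powersetCard, hScard]
      decide
    have := (h S hScard).trans (Finset.card_le_card himg)
    omega
  -- counting
  have hkey : 6 * T.card ≤ n.choose 2 := by
    have hdisj : ∀ c ∈ T, ∀ c' ∈ T, c ≠ c' →
        Disjoint ((φ c).powersetCard 2) ((φ c').powersetCard 2) := by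
      intro c hc c' hc' hne
      rw [Finset.disjoint_left]
      intro p hp hp'
      rw [Finset.mem_powersetCard] at hp hp'
      have : p ⊆ φ c ∩ φ c' := Finset.subset_inter hp.1 hp'.1
      have := (Finset.card_le_card this).trans (main c hc c' hc' hne)
      omega
    have hbU : (T.biUnion fun c => (φ c).powersetCard 2).card = 6 * T.card := by
      rw [Finset.card_biUnion hdisj]
      have : ∀ c ∈ T, ((φ c).powersetCard 2).card = 6 := by
        intro c hc
        rw [Finset.card_powersetCard, hφcard c hc]; decide
      rw [Finset.sum_congr rfl this, Finset.sum_const, smul_eq_mul, mul_comm]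
    have hsub : (T.biUnion fun c => (φ c).powersetCard 2) ⊆
        (univ : Finset (Fin n)).powersetCard 2 := by
      intro p hp
      obtain ⟨c, hc, hp⟩ := Finset.mem_biUnion.mp hp
      rw [Finset.mem_powersetCard] at hp ⊢
      exact ⟨Finset.subset_univ p, hp.2⟩
    have := Finset.card_le_card hsub
    rw [hbU, Finset.card_powersetCard, Finset.card_univ, Fintype.card_fin] at this
    exact this
  rw [le_div_iff₀ (by norm_num : (0:ℝ) < 6)]
  have : ((6 * T.card : ℕ) : ℝ) ≤ ((n.choose 2 : ℕ) : ℝ) := Nat.cast_le.mpr hkey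
  push_cast at this ⊢
  linarith
end
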